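/- (Lambert quadrilateral) Suppose u, v, w, z are nonzero vectors representing distinct projective points that are linearly dependent (coplanar projective points), with B(x,x) ≠ 0 for each of them, such that every pairwise projective quadrance among u, v, w, z is defined and nonzero, every projective spread among the projective lines they determine is defined (all denominators nonzero), and the projective spreads satisfy S(uv, uz) = S(vu, vw) = S(wv, wz) = 1. Set q = q(u,v) and p = q(v,w), and assume 1 − q·p ≠ 0. Then q(w,z) = q(1 − p)/(1 − q·p), q(u,z) = p(1 − q)/(1 − q·p), q(u,w) = q + p − q·p, q(v,z) = (q + p − 2q·p)/(1 − q·p), and S(zu, zw) = 1 − p·q. -/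

import Mathlib

/-- The projective quadrance between the projective points `[U]` and `[V]`. -/
def projQuadrance {F : Type*} [Field F] {M : Type*} [AddCommGroup M] [Module F M]
    (B : LinearMap.BilinForm F M) (U V : M) : F :=
  1 - (B U V) ^ 2 / (B U U * B V V)

/-- The projective spread between the projective lines `WU` and `WV`
(the spread at the vertex `[W]`). -/
def projSpread {F : Type*} [Field F] {M : Type*} [AddCommGroup M] [Module F M]
    (B : LinearMap.BilinForm F M) (W U V : M) : F :=
  1 - (B W W * B U V - B U W * B V W) ^ 2 /
      ((B U U * B W W - (B U W) ^ 2) * (B V V * B W W - (B V W) ^ 2))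

set_option maxHeartbeats 1000000

theorem spread_eq_one_num {F : Type*} [Field F] {M : Type*} [AddCommGroup M] [Module F M]
    (B : LinearMap.BilinForm F M) (W U V : M)
    (h1 : B U U * B W W - (B U W) ^ 2 ≠ 0) (h2 : B V V * B W W - (B V W) ^ 2 ≠ 0)
    (hS : projSpread B W U V = 1) :
    B W W * B U V - B U W * B V W = 0 := by
  unfold projSpread at hS
  have h3 : (B W W * B U V - B U W * B V W) ^ 2 /
      ((B U U * B W W - (B U W) ^ 2) * (B V V * B W W - (B V W) ^ 2)) = 0 := by
    linear_combination -hS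
  rw [div_eq_zero_iff] at h3
  rcases h3 with h3 | h3
  · exact pow_eq_zero_iff (by norm_num : (2:ℕ) ≠ 0) |>.mp h3
  · exact absurd h3 (mul_ne_zero h1 h2)

set_option maxHeartbeats 1000000 in
theorem lambert_aux {F : Type*} [Field F] (A Bv C D ee ff gg hh ii jj q p α : F)
    (hA : A ≠ 0) (hBv : Bv ≠ 0) (hC : C ≠ 0) (hD : D ≠ 0) (hh0 : hh ≠ 0)
    (hff : ff = ee * hh / Bv) (hgg : gg = α * A) (hii : ii = α * ee)
    (hjj : jj = α * ee * C / hh)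
    (hD5 : D = α ^ 2 * ((A * Bv - ee ^ 2) * hh ^ 2 + ee ^ 2 * (C * Bv)) / (Bv * hh ^ 2))
    (hq2 : q = 1 - ee ^ 2 / (A * Bv)) (hp2 : p = 1 - hh ^ 2 / (Bv * C))
    (hqpn : A * Bv * hh ^ 2 - ee ^ 2 * hh ^ 2 + C * Bv * ee ^ 2 ≠ 0) (hqp : 1 - q * p ≠ 0)
    (hduz : A * D - gg ^ 2 ≠ 0) (hdwz : C * D - jj ^ 2 ≠ 0) :
    (1 - jj ^ 2 / (C * D) = q * (1 - p) / (1 - q * p)) ∧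
    (1 - gg ^ 2 / (A * D) = p * (1 - q) / (1 - q * p)) ∧
    (1 - ff ^ 2 / (A * C) = q + p - q * p) ∧
    (1 - ii ^ 2 / (Bv * D) = (q + p - 2 * q * p) / (1 - q * p)) ∧
    (1 - (D * ff - gg * jj) ^ 2 / ((A * D - gg ^ 2) * (C * D - jj ^ 2)) = 1 - p * q) := by
  refine ⟨?_, ?_, ?_, ?_, ?_⟩
  · have eL : jj ^ 2 / (C * D) = ee ^ 2 * (C * Bv) / (A * Bv * hh ^ 2 - ee ^ 2 * hh ^ 2 + C * Bv * ee ^ 2) := by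
      rw [div_eq_div_iff (mul_ne_zero hC hD) hqpn, hjj, hD5]
      field_simp [hA, hBv, hC, hh0]
    have eR : q * (1 - p) / (1 - q * p)
        = (A * Bv - ee ^ 2) * hh ^ 2 / (A * Bv * hh ^ 2 - ee ^ 2 * hh ^ 2 + C * Bv * ee ^ 2) := by
      rw [div_eq_div_iff hqp hqpn, hq2, hp2]
      field_simp [hA, hBv, hC, hh0]
      try ring
      try tauto
    rw [eL, eR]
    rw [eq_div_iff hqpn, sub_mul, div_mul_cancel₀ _ hqpn]
    ring
  · have eL : gg ^ 2 / (A * D) = A * Bv * hh ^ 2 / (A * Bv * hh ^ 2 - ee ^ 2 * hh ^ 2 + C * Bv * ee ^ 2) := by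
      rw [div_eq_div_iff (mul_ne_zero hA hD) hqpn, hgg, hD5]
      field_simp [hA, hBv, hC, hh0]
    have eR : p * (1 - q) / (1 - q * p)
        = (C * Bv * ee ^ 2 - ee ^ 2 * hh ^ 2) / (A * Bv * hh ^ 2 - ee ^ 2 * hh ^ 2 + C * Bv * ee ^ 2) := by
      rw [div_eq_div_iff hqp hqpn, hq2, hp2]
      field_simp [hA, hBv, hC, hh0]; ring
    rw [eL, eR]
    rw [eq_div_iff hqpn, sub_mul, div_mul_cancel₀ _ hqpn]
    ring
  · rw [hff, hq2, hp2]
    field_simp [hA, hBv, hC, hh0]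
    ring
  · have eL : ii ^ 2 / (Bv * D) = ee ^ 2 * hh ^ 2 / (A * Bv * hh ^ 2 - ee ^ 2 * hh ^ 2 + C * Bv * ee ^ 2) := by
      rw [div_eq_div_iff (mul_ne_zero hBv hD) hqpn, hii, hD5]
      field_simp [hA, hBv, hC, hh0]
    have eR : (q + p - 2 * q * p) / (1 - q * p)
        = (A * Bv * hh ^ 2 - 2 * ee ^ 2 * hh ^ 2 + C * Bv * ee ^ 2) / (A * Bv * hh ^ 2 - ee ^ 2 * hh ^ 2 + C * Bv * ee ^ 2) := by
      rw [div_eq_div_iff hqp hqpn, hq2, hp2]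
      field_simp [hA, hBv, hC, hh0]; ring
    rw [eL, eR]
    rw [eq_div_iff hqpn, sub_mul, div_mul_cancel₀ _ hqpn]
    ring
  · have e51 : D * ff - gg * jj
        = -(α ^ 2 * ee * ((A * Bv - ee ^ 2) * (Bv * C - hh ^ 2)) / (Bv ^ 2 * hh)) := by
      rw [hff, hgg, hjj, hD5]
      field_simp [hBv, hh0]
      ring
    have e52 : A * D - gg ^ 2 = α ^ 2 * A * ee ^ 2 * (Bv * C - hh ^ 2) / (Bv * hh ^ 2) := by
      rw [hgg, hD5]
      field_simp [hBv, hh0]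
      ring
    have e53 : C * D - jj ^ 2 = α ^ 2 * C * (A * Bv - ee ^ 2) / Bv := by
      rw [hjj, hD5]
      field_simp [hBv, hh0]
      ring
    have e5 : (D * ff - gg * jj) ^ 2 / ((A * D - gg ^ 2) * (C * D - jj ^ 2)) = p * q := by
      rw [div_eq_iff (mul_ne_zero hduz hdwz), e51, e52, e53, hq2, hp2]
      field_simp [hA, hBv, hC, hh0]
    rw [e5]

theorem lambert_quadrilateral
    {F : Type*} [Field F] (hchar : (2 : F) ≠ 0)
    {M : Type*} [AddCommGroup M] [Module F M]
    (B : LinearMap.BilinForm F M) (hsym : ∀ x y : M, B x y = B y x)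
    (u v w z : M) (hu : u ≠ 0) (hv : v ≠ 0) (hw : w ≠ 0) (hz : z ≠ 0)
    (hau : B u u ≠ 0) (hav : B v v ≠ 0) (haw : B w w ≠ 0) (haz : B z z ≠ 0)
    -- the four projective points are pairwise distinct
    (huv : ∀ c : F, v ≠ c • u) (huw : ∀ c : F, w ≠ c • u) (huz : ∀ c : F, z ≠ c • u)
    (hvw : ∀ c : F, w ≠ c • v) (hvz : ∀ c : F, z ≠ c • v) (hwz : ∀ c : F, z ≠ c • w)
    -- the four projective points are coplanar
    (hdep : ∃ a b c d : F, (a ≠ 0 ∨ b ≠ 0 ∨ c ≠ 0 ∨ d ≠ 0) ∧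
      a • u + b • v + c • w + d • z = 0)
    -- all pairwise projective quadrances are nonzero
    (hquv : projQuadrance B u v ≠ 0) (hquw : projQuadrance B u w ≠ 0)
    (hquz : projQuadrance B u z ≠ 0) (hqvw : projQuadrance B v w ≠ 0)
    (hqvz : projQuadrance B v z ≠ 0) (hqwz : projQuadrance B w z ≠ 0)
    -- all projective spreads are defined: all denominators are nonzero
    (hduv : B u u * B v v - (B u v) ^ 2 ≠ 0) (hduw : B u u * B w w - (B u w) ^ 2 ≠ 0)
    (hduz : B u u * B z z - (B u z) ^ 2 ≠ 0) (hdvw : B v v * B w w - (B v w) ^ 2 ≠ 0)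
    (hdvz : B v v * B z z - (B v z) ^ 2 ≠ 0) (hdwz : B w w * B z z - (B w z) ^ 2 ≠ 0)
    -- the three right spreads
    (hSu : projSpread B u v z = 1) (hSv : projSpread B v u w = 1)
    (hSw : projSpread B w v z = 1)
    (q p : F) (hq : projQuadrance B u v = q) (hp : projQuadrance B v w = p)
    (hqp : 1 - q * p ≠ 0) :
    projQuadrance B w z = q * (1 - p) / (1 - q * p) ∧
      projQuadrance B u z = p * (1 - q) / (1 - q * p) ∧
      projQuadrance B u w = q + p - q * p ∧
      projQuadrance B v z = (q + p - 2 * q * p) / (1 - q * p) ∧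
      projSpread B z u w = 1 - p * q := by
  -- symmetric-twisted nonzero denominators
  have hduv' : B v v * B u u - (B v u) ^ 2 ≠ 0 := by
    rw [hsym v u]; intro hX; exact hduv (by linear_combination hX)
  have hduz' : B z z * B u u - (B z u) ^ 2 ≠ 0 := by
    rw [hsym z u]; intro hX; exact hduz (by linear_combination hX)
  have hdvw' : B w w * B v v - (B w v) ^ 2 ≠ 0 := by
    rw [hsym w v]; intro hX; exact hdvw (by linear_combination hX)
  have hdwz' : B z z * B w w - (B z w) ^ 2 ≠ 0 := by
    rw [hsym z w]; intro hX; exact hdwz (by linear_combination hX)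
  -- numerator conditions from the three right spreads
  have hf : B v v * B u w = B u v * B v w := by
    have := spread_eq_one_num B v u w hduv hdvw' hSv
    rw [hsym w v] at this; linear_combination this
  have hR1 : B u u * B v z = B u v * B u z := by
    have := spread_eq_one_num B u v z hduv' hduz' hSu
    rw [hsym v u, hsym z u] at this; linear_combination this
  have hR3 : B w w * B v z = B v w * B w z := by
    have := spread_eq_one_num B w v z hdvw hdwz' hSw
    rw [hsym z w] at this; linear_combination this
  -- z is in the span of u, v, w
  obtain ⟨a, b, c, d, hne, hsum⟩ := hdep
  have hd : d ≠ 0 := by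
    intro hd0
    subst hd0
    rw [zero_smul, add_zero] at hsum
    by_cases hc : c = 0
    · subst hc
      rw [zero_smul, add_zero] at hsum
      by_cases hb : b = 0
      · subst hb
        rw [zero_smul, add_zero] at hsum
        have ha : a ≠ 0 := by tauto
        exact hu (by simpa [smul_eq_zero, ha] using hsum)
      · apply huv (-(a/b))
        have : b • v = -(a • u) := by
          rw [eq_neg_iff_add_eq_zero, add_comm]; exact hsum
        calc v = b⁻¹ • (b • v) := by rw [smul_smul, inv_mul_cancel₀ hb, one_smul]
          _ = (-(a/b)) • u := by rw [this, smul_neg, smul_smul]; rw [neg_smul]; ring_nf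
    · -- w = s • u + t • v, contradiction with hf
      have hw' : w = (-(a/c)) • u + (-(b/c)) • v := by
        have h1 : c • w = -(a • u + b • v) := by
          rw [eq_neg_iff_add_eq_zero, add_comm]; exact hsum
        calc w = c⁻¹ • (c • w) := by rw [smul_smul, inv_mul_cancel₀ hc, one_smul]
          _ = _ := by rw [h1]; match_scalars <;> field_simp
      have huw2 : B u w = (-(a/c)) * B u u + (-(b/c)) * B u v := by
        rw [hw']; simp [map_add, map_smul, smul_eq_mul]
      have hvw2 : B v w = (-(a/c)) * B u v + (-(b/c)) * B v v := by
        rw [hw']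
        simp only [map_add, map_smul, LinearMap.add_apply, LinearMap.smul_apply, smul_eq_mul]
        rw [hsym v u]
      have hs0 : (-(a/c)) * (B u u * B v v - (B u v) ^ 2) = 0 := by
        rw [huw2, hvw2] at hf; linear_combination hf
      rcases mul_eq_zero.mp hs0 with h0 | h0
      · apply hvw (-(b/c))
        rw [hw', h0, zero_smul, zero_add]
      · exact hduv h0
  obtain ⟨α, β, γ, hzd⟩ : ∃ α β γ : F, z = α • u + β • v + γ • w := by
    refine ⟨-(a/d), -(b/d), -(c/d), ?_⟩
    have h1 : d • z = -(a • u + b • v + c • w) := by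
      rw [eq_neg_iff_add_eq_zero, add_comm]; exact hsum
    calc z = d⁻¹ • (d • z) := by rw [smul_smul, inv_mul_cancel₀ hd, one_smul]
      _ = _ := by rw [h1]; match_scalars <;> field_simp
  -- expansions of B-values at z
  have hgg : B u z = α * B u u + β * B u v + γ * B u w := by
    rw [hzd]; simp [map_add, map_smul, smul_eq_mul]
  have hii : B v z = α * B u v + β * B v v + γ * B v w := by
    rw [hzd]
    simp only [map_add, map_smul, smul_eq_mul]
    rw [hsym v u]
  have hjj : B w z = α * B u w + β * B v w + γ * B w w := by
    rw [hzd]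
    simp only [map_add, map_smul, smul_eq_mul]
    rw [hsym w u, hsym w v]
  have hDD : B z z = α * B u z + β * B v z + γ * B w z := by
    nth_rewrite 2 [hzd]
    simp only [map_add, map_smul, smul_eq_mul]
    rw [hsym z u, hsym z v, hsym z w]
  rw [hgg, hii] at hR1
  rw [hii, hjj] at hR3
  have hkey1 : (β * B v v + γ * B v w) * (B u u * B v v - (B u v) ^ 2) = 0 := by
    linear_combination B v v * hR1 + γ * B u v * hf
  have hb : β * B v v = -(γ * B v w) := by
    rcases mul_eq_zero.mp hkey1 with h0 | h0
    · linear_combination h0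
    · exact absurd h0 hduv
  have hkey2 : (α * B u v + β * B v v) * (B v v * B w w - (B v w) ^ 2) = 0 := by
    linear_combination B v v * hR3 + α * B v w * hf
  have hA : α * B u v = γ * B v w := by
    rcases mul_eq_zero.mp hkey2 with h0 | h0
    · linear_combination h0 - hb
    · exact absurd h0 hdvw
  have hg3 : B u z = α * B u u := by
    apply mul_left_cancel₀ hav
    linear_combination B v v * hgg + B u v * hb + γ * hf
  have hi3 : B v z = α * B u v := by
    apply mul_left_cancel₀ hav
    linear_combination B v v * hii + B v v * hb
  have hj3 : B w z = γ * B w w := by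
    apply mul_left_cancel₀ hav
    linear_combination B v v * hjj + α * hf + B v w * hA + B v w * hb
  rw [hg3, hi3, hj3] at hDD
  have hD3 : B v v * B z z =
      α ^ 2 * (B u u * B v v - (B u v) ^ 2) + γ ^ 2 * (B w w * B v v) := by
    linear_combination B v v * hDD + α * B u v * hb + α * B u v * hA
  by_cases hh0 : B v w = 0
  · exfalso
    have hp1 : p = 1 := by
      rw [← hp]; unfold projQuadrance; rw [hh0]; simp
    have hee : B u v ≠ 0 := by
      intro he0
      apply hqp
      rw [← hq, hp1]; unfold projQuadrance; rw [he0]; simp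
    have hα : α = 0 := by
      have h0 := hA; rw [hh0, mul_zero] at h0
      exact (mul_eq_zero.mp h0).resolve_right hee
    have hβ : β = 0 := by
      have h0 := hb; rw [hh0, mul_zero, neg_zero] at h0
      exact (mul_eq_zero.mp h0).resolve_right hav
    apply hwz γ
    rw [hzd, hα, hβ, zero_smul, zero_smul, zero_add, zero_add]
  · -- main case
    have hγ : γ = α * B u v / B v w := by
      rw [eq_div_iff hh0]; linear_combination -hA
    have hff : B u w = B u v * B v w / B v v := by
      rw [eq_div_iff hav]; linear_combination hf
    have hD4 : B z z =
        (α ^ 2 * (B u u * B v v - (B u v) ^ 2) + γ ^ 2 * (B w w * B v v)) / B v v := by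
      rw [eq_div_iff hav]; linear_combination hD3
    have hq2 : q = 1 - (B u v) ^ 2 / (B u u * B v v) := by rw [← hq]; rfl
    have hp2 : p = 1 - (B v w) ^ 2 / (B v v * B w w) := by rw [← hp]; rfl
    have hD5 : B z z = α ^ 2 * ((B u u * B v v - (B u v) ^ 2) * (B v w) ^ 2
        + (B u v) ^ 2 * (B w w * B v v)) / (B v v * (B v w) ^ 2) := by
      rw [eq_div_iff (mul_ne_zero hav (pow_ne_zero 2 hh0))]
      linear_combination (B v w) ^ 2 * hD3 - (B w w * B v v) * (γ * (B v w) + α * (B u v)) * hA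
    have h1 : 1 - q * p = (B u u * B v v * (B v w) ^ 2 - (B u v) ^ 2 * (B v w) ^ 2
        + B w w * B v v * (B u v) ^ 2) / (B u u * B v v * (B v v * B w w)) := by
      rw [hq2, hp2]; field_simp [hau, hav, haw, hh0]; ring
    have hqpn : B u u * B v v * (B v w) ^ 2 - (B u v) ^ 2 * (B v w) ^ 2
        + B w w * B v v * (B u v) ^ 2 ≠ 0 := by
      intro h0; apply hqp; rw [h1, h0, zero_div]
    have hj4 : B w z = α * B u v * B w w / B v w := by
      rw [hj3, hγ]; ring
    obtain ⟨G1, G2, G3, G4, G5⟩ := lambert_aux (B u u) (B v v) (B w w) (B z z)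
      (B u v) (B u w) (B u z) (B v w) (B v z) (B w z) q p α
      hau hav haw haz hh0 hff hg3 hi3 hj4 hD5 hq2 hp2 hqpn hqp hduz hdwz
    exact ⟨G1, G2, G3, G4, G5⟩
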